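/- Let H be a subgroup of the group of orientation-preserving homeomorphisms of S¹ that has a periodic (finite) orbit. Then all finite orbits of H have the same cardinality. -/
import Mathlib


/-- The group of self-homeomorphisms of a topological space. -/
instance {X : Type*} [TopologicalSpace X] : Group (X ≃ₜ X) where
  mul f g := g.trans f
  one := Homeomorph.refl X
  inv := Homeomorph.symm
  mul_assoc _ _ _ := rfl
  one_mul _ := Homeomorph.ext fun _ => rfl
  mul_one _ := Homeomorph.ext fun _ => rfl
  inv_mul_cancel f := Homeomorph.ext f.symm_apply_apply

/-- A homeomorphism of the circle `ℝ/ℤ` is orientation preserving if it lifts to a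
strictly increasing map `F : ℝ → ℝ` commuting with the unit translation. -/
def OrientationPreserving (f : UnitAddCircle ≃ₜ UnitAddCircle) : Prop :=
  ∃ F : ℝ → ℝ, StrictMono F ∧ (∀ x : ℝ, F (x + 1) = F x + 1) ∧
    ∀ x : ℝ, f (x : UnitAddCircle) = ((F x : ℝ) : UnitAddCircle)

/-- The orbit of a point under a subgroup of the homeomorphism group. -/
def orbitOf (H : Subgroup (UnitAddCircle ≃ₜ UnitAddCircle)) (x : UnitAddCircle) :
    Set UnitAddCircle :=
  {y | ∃ h ∈ H, h x = y}

/-- A strictly monotone self-map of a finite set of reals fixes it pointwise. -/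
lemma strictMono_fixed_of_mapsTo {F : ℝ → ℝ} (hF : StrictMono F) {S : Set ℝ}
    (hS : S.Finite) (hm : Set.MapsTo F S S) : ∀ t ∈ S, F t = t := by
  by_contra hc
  push_neg at hc
  obtain ⟨t0, ht0S, ht0⟩ := hc
  have hbij : Set.BijOn F S S := (hS.injOn_iff_bijOn_of_mapsTo hm).mp hF.injective.injOn
  have hTfin : {t ∈ S | F t ≠ t}.Finite := hS.subset (Set.sep_subset _ _)
  obtain ⟨t, htT, htmin⟩ := Set.exists_min_image _ id hTfin ⟨t0, ht0S, ht0⟩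
  have hmin : ∀ u ∈ S, u < t → F u = u := by
    intro u hu hut
    by_contra h
    exact absurd (htmin u ⟨hu, h⟩) (not_le.2 hut)
  obtain ⟨s, hsS, hst⟩ := hbij.surjOn htT.1
  rcases lt_trichotomy s t with h | h | h
  · exact absurd ((hmin s hsS h).symm.trans hst) (ne_of_lt h)
  · exact htT.2 (h ▸ hst)
  · have hFt : F t < t := lt_of_lt_of_eq (hF h) hst
    have hFtS : F t ∈ S := hm htT.1
    have : F (F t) = F t := hmin _ hFtS hFt
    exact htT.2 (hF.injective this)

/-- Key lemma: an orientation-preserving circle homeomorphism with a fixed point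
fixes every finite invariant set pointwise. -/
lemma fix_of_fix (f : UnitAddCircle ≃ₜ UnitAddCircle) (hf : OrientationPreserving f)
    (x : UnitAddCircle) (hx : f x = x) (B : Set UnitAddCircle) (hB : B.Finite)
    (hBmap : ∀ b ∈ B, f b ∈ B) : ∀ b ∈ B, f b = b := by
  obtain ⟨F, hFmono, hF1, hFlift⟩ := hf
  obtain ⟨a, -, rfl⟩ := x.eq_coe_Ico
  have hFa : ((F a : ℝ) : UnitAddCircle) = ((a : ℝ) : UnitAddCircle) := by
    rw [← hFlift a, hx]
  rw [QuotientAddGroup.eq_iff_sub_mem, AddSubgroup.mem_zmultiples_iff] at hFa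
  obtain ⟨k, hk⟩ := hFa
  rw [zsmul_one] at hk
  set G : ℝ → ℝ := fun t => F t - k with hG
  have hGmono : StrictMono G := fun u v huv => by
    simpa [hG] using hFmono huv
  have hG1 : ∀ t, G (t + 1) = G t + 1 := by
    intro t; simp [hG, hF1]; ring
  have hGa : G a = a := by simp [hG]; linarith [hk]
  have hGlift : ∀ t : ℝ, f (t : UnitAddCircle) = ((G t : ℝ) : UnitAddCircle) := by
    intro t
    rw [hFlift t, QuotientAddGroup.eq_iff_sub_mem, AddSubgroup.mem_zmultiples_iff]
    exact ⟨k, by rw [zsmul_one]; simp [hG]⟩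
  set S : Set ℝ := {t ∈ Set.Ico a (a + 1) | ((t : ℝ) : UnitAddCircle) ∈ B} with hSdef
  have hinj : Set.InjOn (fun t : ℝ => ((t : ℝ) : UnitAddCircle)) S := by
    intro u hu v hv huv
    exact (AddCircle.coe_eq_coe_iff_of_mem_Ico hu.1 hv.1).mp huv
  have hSfin : S.Finite := by
    refine Set.Finite.of_finite_image (hB.subset ?_) hinj
    rintro - ⟨t, ht, rfl⟩
    exact ht.2
  have hmap : Set.MapsTo G S S := by
    rintro t ⟨⟨ht1, ht2⟩, htB⟩
    refine ⟨⟨?_, ?_⟩, ?_⟩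
    · rw [← hGa]; exact hGmono.monotone ht1
    · calc G t < G (a + 1) := hGmono ht2
        _ = a + 1 := by rw [hG1, hGa]
    · rw [← hGlift]; exact hBmap _ htB
  have hfix := strictMono_fixed_of_mapsTo hGmono hSfin hmap
  intro b hb
  set tt := (AddCircle.equivIco 1 a) b with htt
  have htb : ((tt.1 : ℝ) : UnitAddCircle) = b :=
    (AddCircle.equivIco 1 a).symm_apply_apply b
  have htS : tt.1 ∈ S := ⟨tt.2, htb ▸ hb⟩
  rw [← htb, hGlift, hfix tt.1 htS]

theorem finite_orbits_same_card (H : Subgroup (UnitAddCircle ≃ₜ UnitAddCircle))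
    (hop : ∀ h ∈ H, OrientationPreserving h)
    (hper : ∃ x : UnitAddCircle, (orbitOf H x).Finite) :
    ∀ x y : UnitAddCircle, (orbitOf H x).Finite → (orbitOf H y).Finite →
      (orbitOf H x).ncard = (orbitOf H y).ncard := by
  classical
  intro x y hx hy
  -- transfer of fixed points between orbits
  have trans : ∀ (u v : UnitAddCircle), (orbitOf H v).Finite →
      ∀ a b : UnitAddCircle ≃ₜ UnitAddCircle, a ∈ H → b ∈ H → a u = b u → a v = b v := by
    intro u v hv a b ha hb hab
    have hcH : b⁻¹ * a ∈ H := mul_mem (inv_mem hb) ha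
    have hcu : (b⁻¹ * a) u = u := by
      show b.symm (a u) = u
      rw [hab]; exact b.symm_apply_apply u
    have hmap : ∀ c ∈ orbitOf H v, (b⁻¹ * a) c ∈ orbitOf H v := by
      rintro - ⟨g, hg, rfl⟩
      exact ⟨(b⁻¹ * a) * g, mul_mem hcH hg, rfl⟩
    have hfixv : (b⁻¹ * a) v = v :=
      fix_of_fix _ (hop _ hcH) u hcu _ hv hmap v ⟨1, one_mem _, rfl⟩
    have : b.symm (a v) = v := hfixv
    calc a v = b (b.symm (a v)) := (b.apply_symm_apply _).symm
      _ = b v := by rw [this]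
  -- build a bijection between the orbits
  have hx1 : ∀ a : UnitAddCircle, a ∈ orbitOf H x → ∃ h, h ∈ H ∧ h x = a := fun a ha => ha
  let ψ : ↥(orbitOf H x) → ↥(orbitOf H y) := fun a =>
    ⟨(hx1 a.1 a.2).choose y, (hx1 a.1 a.2).choose, (hx1 a.1 a.2).choose_spec.1, rfl⟩
  have hψinj : Function.Injective ψ := by
    intro a b hab
    have h1 := (hx1 a.1 a.2).choose_spec
    have h2 := (hx1 b.1 b.2).choose_spec
    have hyy : (hx1 a.1 a.2).choose y = (hx1 b.1 b.2).choose y := Subtype.ext_iff.mp hab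
    have hxx := trans y x hx _ _ h1.1 h2.1 hyy
    exact Subtype.ext (by rw [← h1.2, ← h2.2, hxx])
  have hψsurj : Function.Surjective ψ := by
    rintro ⟨b, g, hg, rfl⟩
    refine ⟨⟨g x, g, hg, rfl⟩, ?_⟩
    have h1 := (hx1 (g x) ⟨g, hg, rfl⟩).choose_spec
    exact Subtype.ext (trans x y hy _ _ h1.1 hg h1.2)
  rw [← Nat.card_coe_set_eq, ← Nat.card_coe_set_eq]
  exact Nat.card_congr (Equiv.ofBijective ψ ⟨hψinj, hψsurj⟩)
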